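/- Let Q ⪰ 0 be a symmetric matrix with largest eigenvalue λ̄, and v ∈ ℝⁿ. Then for every β ∈ [0,1]: (1−β²)λ̄ + 2β‖v‖ ≤ inf_{λ > λ̄} (λ + v^⊤(λI_n − Q)^{-1}v) ≤ λ̄ + 2‖v‖. -/
import Mathlib


open Matrix

lemma key {n : ℕ} (Q : Matrix (Fin n) (Fin n) ℝ) (hQ : Q.IsHermitian) (v : Fin n → ℝ)
    (l : ℝ) (hl : ∀ i, hQ.eigenvalues i < l) :
    ∃ w : Fin n → ℝ, (v ⬝ᵥ ((l • (1 : Matrix (Fin n) (Fin n) ℝ) - Q)⁻¹ *ᵥ v)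
        = ∑ i, (l - hQ.eigenvalues i)⁻¹ * (w i)^2) ∧ v ⬝ᵥ v = ∑ i, (w i)^2 := by
  set U : Matrix (Fin n) (Fin n) ℝ := (hQ.eigenvectorUnitary : Matrix (Fin n) (Fin n) ℝ) with hUdef
  set μ := hQ.eigenvalues
  have hU1 : U * star U = 1 := (mem_unitaryGroup_iff.mp hQ.eigenvectorUnitary.2)
  have hU2 : star U * U = 1 := (mem_unitaryGroup_iff'.mp hQ.eigenvectorUnitary.2)
  have hspec : Q = U * diagonal μ * star U := by
    have := hQ.spectral_theorem
    simpa using this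
  have hM : l • (1 : Matrix (Fin n) (Fin n) ℝ) - Q
      = U * diagonal (fun i => l - μ i) * star U := by
    have h1 : l • (1 : Matrix (Fin n) (Fin n) ℝ) = U * (l • 1) * star U := by
      rw [mul_smul_comm, mul_one, smul_mul_assoc, hU1]
    rw [h1, hspec, ← sub_mul, ← mul_sub]
    congr 2
    rw [← diagonal_one, ← diagonal_smul, diagonal_sub]
    funext i
    simp
  have hinv : (l • (1 : Matrix (Fin n) (Fin n) ℝ) - Q)⁻¹
      = U * diagonal (fun i => (l - μ i)⁻¹) * star U := by
    apply Matrix.inv_eq_right_inv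
    rw [hM]
    calc U * diagonal (fun i => l - μ i) * star U * (U * diagonal (fun i => (l - μ i)⁻¹) * star U)
        = U * (diagonal (fun i => l - μ i) * ((star U * U) * diagonal (fun i => (l - μ i)⁻¹))) * star U := by
          simp only [mul_assoc]
      _ = 1 := by
          rw [hU2, one_mul, diagonal_mul_diagonal]
          have : (fun i => (l - μ i) * (l - μ i)⁻¹) = fun _ => (1:ℝ) := by
            funext i
            exact mul_inv_cancel₀ (by linarith [hl i])
          rw [this, diagonal_one, mul_one, hU1]
  have hvU : v ᵥ* U = star U *ᵥ v := by
    rw [Matrix.star_eq_conjTranspose, conjTranspose_eq_transpose_of_trivial, mulVec_transpose]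
  refine ⟨star U *ᵥ v, ?_, ?_⟩
  · rw [hinv, ← Matrix.mulVec_mulVec, ← Matrix.mulVec_mulVec, dotProduct_mulVec, hvU, dotProduct]
    apply Finset.sum_congr rfl
    intro i _
    rw [mulVec_diagonal]
    ring
  · have h2 : (star U *ᵥ v) ⬝ᵥ (star U *ᵥ v) = v ⬝ᵥ v := by
      rw [dotProduct_mulVec]
      have h3 : (star U *ᵥ v) ᵥ* star U = v := by
        rw [Matrix.star_eq_conjTranspose, conjTranspose_eq_transpose_of_trivial,
          vecMul_transpose, mulVec_mulVec]
        have hT : Uᵀ = star U := by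
          rw [Matrix.star_eq_conjTranspose, conjTranspose_eq_transpose_of_trivial]
        rw [hT, hU1, one_mulVec]
      rw [h3]
    rw [← h2, dotProduct]
    apply Finset.sum_congr rfl
    intro i _
    ring



/-- for `Q ⪰ 0` with largest eigenvalue `λ̄`, `v ∈ ℝⁿ` and `β ∈ [0,1]`,
`(1−β²)λ̄ + 2β‖v‖ ≤ inf_{λ > λ̄} (λ + v^⊤(λI − Q)⁻¹v) ≤ λ̄ + 2‖v‖`. -/
theorem stmt6 {n : ℕ} (Q : Matrix (Fin n) (Fin n) ℝ) (hQ : Q.PosSemidef) (v : Fin n → ℝ)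
    (β : ℝ) (hβ : β ∈ Set.Icc (0 : ℝ) 1) :
    (1 - β ^ 2) * (⨆ i, hQ.1.eigenvalues i) + 2 * β * Real.sqrt (v ⬝ᵥ v) ≤
      (⨅ l : {l : ℝ // (⨆ i, hQ.1.eigenvalues i) < l},
        (l : ℝ) + v ⬝ᵥ (((l : ℝ) • (1 : Matrix (Fin n) (Fin n) ℝ) - Q)⁻¹ *ᵥ v)) ∧
    (⨅ l : {l : ℝ // (⨆ i, hQ.1.eigenvalues i) < l},
        (l : ℝ) + v ⬝ᵥ (((l : ℝ) • (1 : Matrix (Fin n) (Fin n) ℝ) - Q)⁻¹ *ᵥ v)) ≤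
      (⨆ i, hQ.1.eigenvalues i) + 2 * Real.sqrt (v ⬝ᵥ v) := by
  obtain ⟨hβ0, hβ1⟩ := hβ
  set μ : Fin n → ℝ := hQ.1.eigenvalues with hμ
  set lb : ℝ := ⨆ i, μ i with hlb
  set s : ℝ := Real.sqrt (v ⬝ᵥ v) with hsdef
  have hs0 : 0 ≤ s := Real.sqrt_nonneg _
  have hμ0 : ∀ i, 0 ≤ μ i := fun i => hQ.eigenvalues_nonneg i
  have hlb0 : 0 ≤ lb := Real.iSup_nonneg hμ0
  have hμle : ∀ i, μ i ≤ lb := fun i =>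
    le_ciSup (Set.Finite.bddAbove (Set.finite_range μ)) i
  have hvv : v ⬝ᵥ v = s ^ 2 := by
    rw [hsdef, Real.sq_sqrt]
    · exact Finset.sum_nonneg fun i _ => mul_self_nonneg (v i)
  have hlow : ∀ l : ℝ, lb < l →
      s ^ 2 / l ≤ v ⬝ᵥ ((l • (1 : Matrix (Fin n) (Fin n) ℝ) - Q)⁻¹ *ᵥ v) := by
    intro l hl
    have hlpos : 0 < l := lt_of_le_of_lt hlb0 hl
    obtain ⟨w, hw1, hw2⟩ := key Q hQ.1 v l (fun i => lt_of_le_of_lt (hμle i) hl)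
    rw [hw1, ← hvv]
    rw [hw2, div_eq_inv_mul, Finset.mul_sum]
    apply Finset.sum_le_sum
    intro i _
    apply mul_le_mul_of_nonneg_right _ (sq_nonneg (w i))
    apply inv_anti₀
    · linarith [lt_of_le_of_lt (hμle i) hl]
    · linarith [hμ0 i]
  have hhigh : ∀ l : ℝ, lb < l →
      v ⬝ᵥ ((l • (1 : Matrix (Fin n) (Fin n) ℝ) - Q)⁻¹ *ᵥ v) ≤ s ^ 2 / (l - lb) := by
    intro l hl
    obtain ⟨w, hw1, hw2⟩ := key Q hQ.1 v l (fun i => lt_of_le_of_lt (hμle i) hl)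
    rw [hw1, ← hvv, hw2, div_eq_inv_mul, Finset.mul_sum]
    apply Finset.sum_le_sum
    intro i _
    apply mul_le_mul_of_nonneg_right _ (sq_nonneg (w i))
    apply inv_anti₀
    · linarith
    · linarith [hμle i]
  have hne : Nonempty {l : ℝ // lb < l} := ⟨⟨lb + 1, lt_add_one lb⟩⟩
  have hBdd : BddBelow (Set.range fun l : {l : ℝ // lb < l} =>
      (l : ℝ) + v ⬝ᵥ (((l : ℝ) • (1 : Matrix (Fin n) (Fin n) ℝ) - Q)⁻¹ *ᵥ v)) := by
    refine ⟨lb, ?_⟩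
    rintro x ⟨⟨l, hl⟩, rfl⟩
    have h1 := hlow l hl
    have hlpos : 0 < l := lt_of_le_of_lt hlb0 hl
    have h2 : 0 ≤ s ^ 2 / l := div_nonneg (sq_nonneg s) hlpos.le
    linarith
  constructor
  · apply le_ciInf
    rintro ⟨l, hl⟩
    have hlpos : 0 < l := lt_of_le_of_lt hlb0 hl
    have h1 := hlow l hl
    set t : ℝ := s ^ 2 / l with ht
    have htl : t * l = s ^ 2 := by rw [ht]; field_simp
    have hβsq : β ^ 2 ≤ 1 := pow_le_one₀ hβ0 hβ1
    have hb2 : 0 ≤ (1 - β ^ 2) * (l - lb) := mul_nonneg (by linarith) (by linarith)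
    have hb3 : 0 ≤ β ^ 2 * l + t - 2 * β * s := by
      nlinarith [sq_nonneg (β * l - s), mul_pos hlpos hlpos]
    linarith
  · apply le_of_forall_pos_le_add
    intro ε hε
    set l : ℝ := lb + s + ε with hldef
    have hl : lb < l := by simp only [hldef]; linarith
    have hstep := ciInf_le hBdd ⟨l, hl⟩
    have h1 := hhigh l hl
    have h2 : s ^ 2 / (l - lb) ≤ s := by
      rw [div_le_iff₀ (by simp only [hldef]; linarith)]
      nlinarith
    linarith
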